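/- Let B be an n×2 unimodular integer matrix (all 2×2 minors in {0,±1}) of rank 2 with no zero rows and no two rows equal up to sign. Then, up to elementary column operations over ℤ, permuting rows, and multiplying rows by −1, B is one of exactly two matrices: the matrix with rows (1,0),(0,1), or the matrix with rows (1,0),(0,1),(1,1). -/

import Mathlib

open Matrix Module Submodule

lemma aux_rank_le_one {n : ℕ} (B : Matrix (Fin n) (Fin 2) ℤ)
    (h : ∀ i j : Fin n, B i 0 * B j 1 - B i 1 * B j 0 = 0) : B.rank ≤ 1 := by
  classical
  rw [Matrix.rank_eq_finrank_span_cols]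
  have hr : Set.range Bᵀ = {Bᵀ 0, Bᵀ 1} := by
    ext x; constructor
    · rintro ⟨i, rfl⟩; fin_cases i <;> simp
    · rintro (rfl | rfl) <;> exact ⟨_, rfl⟩
  rw [show Set.range B.col = Set.range Bᵀ from rfl, hr]
  set c₀ : Fin n → ℤ := Bᵀ 0 with hc₀
  set c₁ : Fin n → ℤ := Bᵀ 1 with hc₁
  by_cases h0 : c₀ = 0
  · rw [h0, Submodule.span_insert_zero]
    calc finrank ℤ (span ℤ ({c₁} : Set (Fin n → ℤ))) ≤ ({c₁} : Set (Fin n → ℤ)).toFinset.card :=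
          finrank_span_le_card _
      _ ≤ 1 := by simp
  · obtain ⟨i, hi⟩ : ∃ i, c₀ i ≠ 0 := by
      by_contra hc; push_neg at hc; exact h0 (funext hc)
    have hrel : (B i 0) • c₁ = (B i 1) • c₀ := by
      funext j
      have := h i j
      simp only [hc₀, hc₁, Pi.smul_apply, smul_eq_mul, Matrix.transpose_apply]
      linarith
    set W := span ℤ ({c₀} : Set (Fin n → ℤ)) with hW
    have hmem : ∀ x ∈ span ℤ ({c₀, c₁} : Set (Fin n → ℤ)), (B i 0) • x ∈ W := by
      intro x hx
      induction hx using Submodule.span_induction with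
      | mem x hx =>
        rcases hx with rfl | rfl
        · exact smul_mem _ _ (Submodule.mem_span_singleton_self _)
        · rw [hrel]; exact smul_mem _ _ (Submodule.mem_span_singleton_self _)
      | zero => rw [smul_zero]; exact zero_mem _
      | add x y _ _ hx hy => rw [smul_add]; exact add_mem hx hy
      | smul a x _ hx => rw [smul_comm]; exact smul_mem _ _ hx
    let f : span ℤ ({c₀, c₁} : Set (Fin n → ℤ)) →ₗ[ℤ] W :=
      LinearMap.codRestrict W ((B i 0) • (span ℤ ({c₀, c₁} : Set (Fin n → ℤ))).subtype)
        (fun x => hmem x x.2)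
    have hinj : Function.Injective f := by
      intro a b hab
      have : (B i 0) • (a : Fin n → ℤ) = (B i 0) • (b : Fin n → ℤ) := by
        have := congrArg Subtype.val hab
        exact this
      have hi' : B i 0 ≠ 0 := hi
      exact Subtype.ext (smul_right_injective _ hi' this)
    have : Module.Finite ℤ W := Module.Finite.span_of_finite ℤ (Set.finite_singleton _)
    calc finrank ℤ (span ℤ ({c₀, c₁} : Set (Fin n → ℤ))) ≤ finrank ℤ W :=
          LinearMap.finrank_le_finrank_of_injective hinj
      _ ≤ ({c₀} : Set (Fin n → ℤ)).toFinset.card := finrank_span_le_card _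
      _ ≤ 1 := by simp

lemma cram0 (u0 u1 v0 v1 w0 w1 d : ℤ) (hd : d = u0*v1 - u1*v0) (hdd : d * d = 1) :
    w0 = (d*(w0*v1 - w1*v0))*u0 + (d*(u0*w1 - u1*w0))*v0 := by
  subst hd; linear_combination (-w0) * hdd

lemma cram1 (u0 u1 v0 v1 w0 w1 d : ℤ) (hd : d = u0*v1 - u1*v0) (hdd : d * d = 1) :
    w1 = (d*(w0*v1 - w1*v0))*u1 + (d*(u0*w1 - u1*w0))*v1 := by
  subst hd; linear_combination (-w1) * hdd

lemma pluck (u0 u1 v0 v1 w0 w1 z0 z1 d : ℤ) (hd : d = u0*v1 - u1*v0) (hdd : d * d = 1) :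
    (d*(w0*v1-w1*v0))*(d*(u0*z1-u1*z0)) - (d*(z0*v1-z1*v0))*(d*(u0*w1-u1*w0))
      = d*(w0*z1-w1*z0) := by
  subst hd; linear_combination ((u0*v1-u1*v0)*(w0*z1-w1*z0)) * hdd


/-- `B` is equivalent to `T` via elementary column operations over `ℤ` (right
multiplication by a matrix of determinant `±1`), row permutations (a bijection of the
row indices), and row sign changes. -/
def RowColEquiv2 {n k : ℕ} (B : Matrix (Fin n) (Fin 2) ℤ) (T : Matrix (Fin k) (Fin 2) ℤ) : Prop :=
  ∃ (e : Fin n ≃ Fin k) (ε : Fin n → ℤ) (Q : Matrix (Fin 2) (Fin 2) ℤ),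
    (∀ i, ε i = 1 ∨ ε i = -1) ∧ (Q.det = 1 ∨ Q.det = -1) ∧
    B = Matrix.diagonal ε * (T.submatrix e id) * Q

/-- Classification of rank-2 unimodular integer matrices with two columns, no zero rows
and no two rows equal up to sign: up to column operations over `ℤ`, row permutations and
row sign changes, `B` is exactly one of the matrix with rows `(1,0),(0,1)` and the matrix
with rows `(1,0),(0,1),(1,1)`. -/
theorem stmt_13 (n : ℕ) (B : Matrix (Fin n) (Fin 2) ℤ)
    (hrank : B.rank = 2)
    (hunim : ∀ f : Fin 2 → Fin n, Function.Injective f →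
      (B.submatrix f id).det ∈ ({0, 1, -1} : Set ℤ))
    (hnz : ∀ i, (fun j => B i j) ≠ 0)
    (hns : ∀ i j : Fin n, i ≠ j →
      (fun k => B i k) ≠ (fun k => B j k) ∧ (fun k => B i k) ≠ (fun k => -B j k)) :
    ∃! c : Fin 2,
      if c = 0 then RowColEquiv2 B (1 : Matrix (Fin 2) (Fin 2) ℤ)
      else RowColEquiv2 B (!![1, 0; 0, 1; 1, 1] : Matrix (Fin 3) (Fin 2) ℤ) := by
  classical
  have hInj : ∀ i j : Fin n, i ≠ j → Function.Injective ![i, j] := by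
    intro i j h a b hab
    fin_cases a <;> fin_cases b <;> simp_all
  have hminor : ∀ i j : Fin n, i ≠ j →
      B i 0 * B j 1 - B i 1 * B j 0 = 0 ∨ B i 0 * B j 1 - B i 1 * B j 0 = 1 ∨
      B i 0 * B j 1 - B i 1 * B j 0 = -1 := by
    intro i j hij
    have h := hunim ![i, j] (hInj i j hij)
    rw [show (B.submatrix ![i, j] id).det = B i 0 * B j 1 - B i 1 * B j 0 from by
      rw [Matrix.det_fin_two]; simp [Matrix.submatrix_apply]] at h
    simpa [Set.mem_insert_iff] using h
  obtain ⟨i₀, i₁, hne, hd0⟩ :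
      ∃ i₀ i₁ : Fin n, i₀ ≠ i₁ ∧ B i₀ 0 * B i₁ 1 - B i₀ 1 * B i₁ 0 ≠ 0 := by
    by_contra hc
    push_neg at hc
    have hall : ∀ i j : Fin n, B i 0 * B j 1 - B i 1 * B j 0 = 0 := by
      intro i j
      by_cases h : i = j
      · subst h; ring
      · exact hc i j h
    have h1 := aux_rank_le_one B hall
    rw [hrank] at h1
    omega
  set d : ℤ := B i₀ 0 * B i₁ 1 - B i₀ 1 * B i₁ 0 with hd_def
  have hd : d = 1 ∨ d = -1 := by
    have h := hminor i₀ i₁ hne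
    rw [← hd_def] at h
    exact h.resolve_left hd0
  have hdd : d * d = 1 := by rcases hd with h | h <;> rw [h] <;> norm_num
  set x : Fin n → ℤ := fun i => d * (B i 0 * B i₁ 1 - B i 1 * B i₁ 0) with hx_def
  set y : Fin n → ℤ := fun i => d * (B i₀ 0 * B i 1 - B i₀ 1 * B i 0) with hy_def
  have hrow : ∀ i (j : Fin 2), B i j = x i * B i₀ j + y i * B i₁ j := by
    intro i j
    fin_cases j
    · show B i 0 = x i * B i₀ 0 + y i * B i₁ 0
      simpa only [hx_def, hy_def] using
        cram0 (B i₀ 0) (B i₀ 1) (B i₁ 0) (B i₁ 1) (B i 0) (B i 1) d hd_def hdd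
    · show B i 1 = x i * B i₀ 1 + y i * B i₁ 1
      simpa only [hx_def, hy_def] using
        cram1 (B i₀ 0) (B i₀ 1) (B i₁ 0) (B i₁ 1) (B i 0) (B i 1) d hd_def hdd
  have hx0 : x i₀ = 1 := by simp only [hx_def]; rw [← hd_def]; exact hdd
  have hy0 : y i₀ = 0 := by simp only [hy_def]; ring
  have hx1 : x i₁ = 0 := by simp only [hx_def]; ring
  have hy1 : y i₁ = 1 := by simp only [hy_def]; rw [← hd_def]; exact hdd
  have hxmem : ∀ i, x i = 0 ∨ x i = 1 ∨ x i = -1 := by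
    intro i
    by_cases h : i = i₁
    · subst h; left; exact hx1
    · rcases hminor i i₁ h with h' | h' | h' <;> rcases hd with h'' | h'' <;>
        simp only [hx_def] <;> rw [h', h''] <;> norm_num
  have hymem : ∀ i, y i = 0 ∨ y i = 1 ∨ y i = -1 := by
    intro i
    by_cases h : i = i₀
    · subst h; left; exact hy0
    · rcases hminor i₀ i (fun hh => h hh.symm) with h' | h' | h' <;> rcases hd with h'' | h'' <;>
        simp only [hy_def] <;> rw [h', h''] <;> norm_num
  have hnz2 : ∀ i, ¬(x i = 0 ∧ y i = 0) := by
    rintro i ⟨h1, h2⟩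
    apply hnz i
    funext j
    simp only [Pi.zero_apply]
    rw [hrow i j, h1, h2]; ring
  have heq : ∀ i j, x i = x j → y i = y j → i = j := by
    intro i j h1 h2
    by_contra hij
    exact (hns i j hij).1 (funext fun k => by rw [hrow i k, hrow j k, h1, h2])
  have heq' : ∀ i j, x i = -x j → y i = -y j → i = j := by
    intro i j h1 h2
    by_contra hij
    exact (hns i j hij).2 (funext fun k => by rw [hrow i k, hrow j k, h1, h2]; ring)
  have hout : ∀ i, i ≠ i₀ → i ≠ i₁ → (x i = 1 ∨ x i = -1) ∧ (y i = 1 ∨ y i = -1) := by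
    intro i h0 h1
    have hx' : x i ≠ 0 := by
      intro hxz
      rcases hymem i with hy' | hy' | hy'
      · exact hnz2 i ⟨hxz, hy'⟩
      · exact h1 (heq i i₁ (by rw [hxz, hx1]) (by rw [hy', hy1]))
      · exact h1 (heq' i i₁ (by rw [hxz, hx1] <;> ring) (by rw [hy', hy1] <;> ring))
    have hy' : y i ≠ 0 := by
      intro hyz
      rcases hxmem i with hx'' | hx'' | hx''
      · exact hx' hx''
      · exact h0 (heq i i₀ (by rw [hx'', hx0]) (by rw [hyz, hy0]))
      · exact h0 (heq' i i₀ (by rw [hx'', hx0] <;> ring) (by rw [hyz, hy0] <;> ring))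
    exact ⟨(hxmem i).resolve_left hx', (hymem i).resolve_left hy'⟩
  have hdet2 : ∀ i j, i ≠ j →
      x i * y j - x j * y i = 0 ∨ x i * y j - x j * y i = 1 ∨ x i * y j - x j * y i = -1 := by
    intro i j hij
    have hp := pluck (B i₀ 0) (B i₀ 1) (B i₁ 0) (B i₁ 1) (B i 0) (B i 1) (B j 0) (B j 1)
      d hd_def hdd
    simp only [hx_def, hy_def]
    rw [hp]
    rcases hminor i j hij with h | h | h <;> rcases hd with h' | h' <;> rw [h, h'] <;> norm_num
  have huniq : ∀ i j, i ≠ i₀ → i ≠ i₁ → j ≠ i₀ → j ≠ i₁ → i = j := by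
    intro i j hi0 hi1 hj0 hj1
    by_contra hij
    obtain ⟨hxi, hyi⟩ := hout i hi0 hi1
    obtain ⟨hxj, hyj⟩ := hout j hj0 hj1
    have h1 : ¬(x i = x j ∧ y i = y j) := fun ⟨a, b⟩ => hij (heq i j a b)
    have h2 : ¬(x i = -x j ∧ y i = -y j) := fun ⟨a, b⟩ => hij (heq' i j a b)
    have h3 := hdet2 i j hij
    rcases hxi with h | h <;> rcases hyi with h' | h' <;> rcases hxj with h'' | h'' <;>
        rcases hyj with h''' | h''' <;>
      simp only [h, h', h'', h'''] at h1 h2 h3 <;> revert h1 h2 h3 <;> norm_num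
  by_cases hdi : ∀ i, i = i₀ ∨ i = i₁
  · -- case n = 2 (universe is {i₀, i₁})
    have hgbij : Function.Bijective (fun i => if i = i₀ then (0 : Fin 2) else 1) := by
      constructor
      · intro a b hab
        rcases hdi a with rfl | rfl <;> rcases hdi b with rfl | rfl <;>
          first | rfl | simp [hne, Ne.symm hne] at hab
      · intro k
        fin_cases k
        · exact ⟨i₀, by simp⟩
        · exact ⟨i₁, by simp [Ne.symm hne]⟩
    set e : Fin n ≃ Fin 2 := Equiv.ofBijective _ hgbij with he_def
    have he0 : e i₀ = 0 := by simp [he_def, Equiv.ofBijective]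
    have he1 : e i₁ = 1 := by simp [he_def, Equiv.ofBijective, Ne.symm hne]
    refine ⟨0, ?_, ?_⟩
    · show if (0 : Fin 2) = 0 then RowColEquiv2 B (1 : Matrix (Fin 2) (Fin 2) ℤ)
        else RowColEquiv2 B (!![1, 0; 0, 1; 1, 1] : Matrix (Fin 3) (Fin 2) ℤ)
      rw [if_pos rfl]
      refine ⟨e, fun _ => 1, !![B i₀ 0, B i₀ 1; B i₁ 0, B i₁ 1],
        fun i => Or.inl rfl, ?_, ?_⟩
      · rw [Matrix.det_fin_two_of, ← hd_def]; exact hd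
      · ext i j
        rcases hdi i with rfl | rfl <;>
          fin_cases j <;>
          simp [Matrix.mul_apply, Matrix.diagonal_mul, Matrix.submatrix_apply,
            Fin.sum_univ_two, he0, he1, Matrix.one_apply]
    · intro c hc
      have hc2 : c = 0 ∨ c = 1 := by omega
      rcases hc2 with rfl | rfl
      · rfl
      · replace hc : RowColEquiv2 B (!![1, 0; 0, 1; 1, 1] : Matrix (Fin 3) (Fin 2) ℤ) := by
          norm_num at hc; exact hc
        obtain ⟨e', _, _, _, _, _⟩ := hc
        have := Fintype.card_congr (e.symm.trans e')
        simp at this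
  · -- case n = 3
    push_neg at hdi
    obtain ⟨i₂, h20, h21⟩ := hdi
    have hall : ∀ i, i = i₀ ∨ i = i₁ ∨ i = i₂ := by
      intro i
      by_cases a : i = i₀
      · exact Or.inl a
      by_cases b : i = i₁
      · exact Or.inr (Or.inl b)
      exact Or.inr (Or.inr (huniq i i₂ a b h20 h21))
    obtain ⟨hs, ht⟩ := hout i₂ h20 h21
    have hgbij : Function.Bijective
        (fun i => if i = i₀ then (0 : Fin 3) else if i = i₁ then 1 else 2) := by
      constructor
      · intro a b hab
        rcases hall a with rfl | rfl | rfl <;> rcases hall b with rfl | rfl | rfl <;>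
          first | rfl | simp [hne, Ne.symm hne, h20, h21, Ne.symm h20, Ne.symm h21] at hab
      · intro k
        fin_cases k
        · exact ⟨i₀, by simp⟩
        · exact ⟨i₁, by simp [Ne.symm hne]⟩
        · exact ⟨i₂, by simp [h20, h21]⟩
    set e : Fin n ≃ Fin 3 := Equiv.ofBijective _ hgbij with he_def
    have he0 : e i₀ = 0 := by simp [he_def, Equiv.ofBijective]
    have he1 : e i₁ = 1 := by simp [he_def, Equiv.ofBijective, Ne.symm hne]
    have he2 : e i₂ = 2 := by simp [he_def, Equiv.ofBijective, h20, h21]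
    refine ⟨1, ?_, ?_⟩
    · show if (1 : Fin 2) = 0 then RowColEquiv2 B (1 : Matrix (Fin 2) (Fin 2) ℤ)
        else RowColEquiv2 B (!![1, 0; 0, 1; 1, 1] : Matrix (Fin 3) (Fin 2) ℤ)
      rw [if_neg (by norm_num)]
      refine ⟨e, fun i => if i = i₀ then 1 else if i = i₁ then x i₂ * y i₂ else x i₂,
        !![B i₀ 0, B i₀ 1; x i₂ * y i₂ * B i₁ 0, x i₂ * y i₂ * B i₁ 1], ?_, ?_, ?_⟩
      · intro i
        by_cases a : i = i₀
        · simp [a]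
        · by_cases b : i = i₁
          · simp only [if_neg a, if_pos b]
            rcases hs with h | h <;> rcases ht with h' | h' <;> rw [h, h'] <;> norm_num
          · simp only [if_neg a, if_neg b]
            exact hs
      · have hQd : (!![B i₀ 0, B i₀ 1; x i₂ * y i₂ * B i₁ 0, x i₂ * y i₂ * B i₁ 1]).det
            = x i₂ * y i₂ * d := by
          rw [Matrix.det_fin_two_of, hd_def]; ring
        rw [hQd]
        rcases hs with h | h <;> rcases ht with h' | h' <;> rcases hd with h'' | h'' <;>
          rw [h, h', h''] <;> norm_num
      · have hss : x i₂ * x i₂ = 1 := by rcases hs with h | h <;> rw [h] <;> norm_num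
        have key : ∀ (ε' : Fin n → ℤ) (Q' : Matrix (Fin 2) (Fin 2) ℤ) (i : Fin n) (j : Fin 2),
            (Matrix.diagonal ε' * ((!![1, 0; 0, 1; 1, 1] : Matrix (Fin 3) (Fin 2) ℤ).submatrix (⇑e) id) * Q') i j
              = ε' i * ((!![1, 0; 0, 1; 1, 1] : Matrix (Fin 3) (Fin 2) ℤ) (e i) 0 * Q' 0 j
                + (!![1, 0; 0, 1; 1, 1] : Matrix (Fin 3) (Fin 2) ℤ) (e i) 1 * Q' 1 j) := by
          intro ε' Q' i j
          rw [Matrix.mul_apply, Fin.sum_univ_two, Matrix.diagonal_mul, Matrix.diagonal_mul]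
          simp only [Matrix.submatrix_apply, id_eq]
          ring
        ext i j
        rw [key]
        rcases hall i with rfl | rfl | rfl
        · rw [he0]
          fin_cases j <;> norm_num
        · rw [he1]
          fin_cases j <;> simp [Ne.symm hne] <;>
            rcases hs with h | h <;> rcases ht with h' | h' <;> rw [h, h'] <;> ring
        · rw [he2]
          fin_cases j
          · simp [h20, h21, Matrix.vecHead, Matrix.vecTail]
            linear_combination (hrow i 0) + (-(y i * B i₁ 0)) * hss
          · simp [h20, h21, Matrix.vecHead, Matrix.vecTail]
            linear_combination (hrow i 1) + (-(y i * B i₁ 1)) * hss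
    · intro c hc
      have hc2 : c = 0 ∨ c = 1 := by omega
      rcases hc2 with rfl | rfl
      · replace hc : RowColEquiv2 B (1 : Matrix (Fin 2) (Fin 2) ℤ) := by
          norm_num at hc; exact hc
        obtain ⟨e', _, _, _, _, _⟩ := hc
        have := Fintype.card_congr (e.symm.trans e')
        simp at this
      · rfl
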